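/- arXiv:2002.04483 — 5 statements merged into one kernel-verified Lean document; each statement's English description precedes it below -/
import Mathlib

section
/- Let 𝒜 be a complex unital Banach algebra (for instance the algebra of bounded linear operators on a complex Banach space), let a, b ∈ 𝒜, and let T > 0. Then there exists a constant C ≥ 0 such that for every natural number n ≥ 1, sup_{τ ∈ [0,T]} ‖(exp(−(τ/n)·a) · exp(−(τ/n)·b))^n − exp(−τ·(a+b))‖ ≤ C/n. In particular the Lie product formula exp(−τ(a+b)) = lim_{n→∞} (exp(−τa/n)exp(−τb/n))^n holds in norm, uniformly in τ ∈ [0,T], with convergence rate O(1/n). -/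
open NormedSpace
open scoped Nat

section aux
variable {𝔹 : Type*} [NormedRing 𝔹] [NormedAlgebra ℂ 𝔹] [CompleteSpace 𝔹] [NormOneClass 𝔹]

lemma real_exp_tsum (z : ℝ) : Real.exp z = ∑' n : ℕ, z ^ n / n ! := by
  rw [Real.exp_eq_exp_ℝ, exp_eq_tsum_div]

lemma my_norm_exp_le (x : 𝔹) : ‖exp x‖ ≤ Real.exp ‖x‖ := by
  rw [exp_eq_tsum (𝕂 := ℂ), real_exp_tsum]
  refine (norm_tsum_le_tsum_norm (norm_expSeries_summable' x)).trans ?_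
  refine Summable.tsum_le_tsum (fun n => ?_) (norm_expSeries_summable' x)
    (Real.summable_pow_div_factorial ‖x‖)
  rw [norm_smul, norm_inv, RCLike.norm_natCast, div_eq_inv_mul]
  gcongr
  exact norm_pow_le x n
end aux

section aux2
variable {𝔹 : Type*} [NormedRing 𝔹] [NormedAlgebra ℂ 𝔹] [CompleteSpace 𝔹] [NormOneClass 𝔹]

lemma my_exp_remainder (x : 𝔹) : ‖exp x - 1 - x‖ ≤ ‖x‖ ^ 2 * Real.exp ‖x‖ := by
  have hsum := expSeries_summable' (𝕂 := ℂ) x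
  have h2 := Summable.sum_add_tsum_nat_add 2 hsum
  have hrange : (∑ i ∈ Finset.range 2, ((i ! : ℂ))⁻¹ • x ^ i) = 1 + x := by
    simp [Finset.sum_range_succ, Nat.factorial]
  have hrepr : exp x - 1 - x = ∑' i : ℕ, (((i + 2)! : ℂ))⁻¹ • x ^ (i + 2) := by
    simp only [exp_eq_tsum (𝕂 := ℂ)]
    rw [← h2, hrange]; abel
  rw [hrepr]
  have hmaj : Summable (fun i : ℕ => ‖x‖ ^ 2 * (‖x‖ ^ i / i !)) :=
    (Real.summable_pow_div_factorial ‖x‖).mul_left _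
  have hns : Summable (fun i : ℕ => ‖(((i + 2)! : ℂ))⁻¹ • x ^ (i + 2)‖) := by
    exact (summable_nat_add_iff 2).2 (norm_expSeries_summable' (𝕂 := ℂ) x) |>.congr (fun i => rfl)
  refine (norm_tsum_le_tsum_norm hns).trans ?_
  have hpt : ∀ i : ℕ, ‖(((i + 2)! : ℂ))⁻¹ • x ^ (i + 2)‖ ≤ ‖x‖ ^ 2 * (‖x‖ ^ i / i !) := by
    intro i
    rw [norm_smul, norm_inv, RCLike.norm_natCast]
    have h1 : ‖x ^ (i + 2)‖ ≤ ‖x‖ ^ (i + 2) := norm_pow_le x _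
    have h2 : ((i ! : ℝ)) ≤ ((i + 2)! : ℝ) := by
      exact_mod_cast Nat.factorial_le (by omega)
    have hi : (0 : ℝ) < i ! := by exact_mod_cast Nat.factorial_pos i
    calc ((((i + 2)! : ℝ)))⁻¹ * ‖x ^ (i + 2)‖ ≤ ((i ! : ℝ))⁻¹ * ‖x‖ ^ (i + 2) := by
          gcongr
      _ = ‖x‖ ^ 2 * (‖x‖ ^ i / i !) := by rw [pow_add]; ring
  refine (Summable.tsum_le_tsum hpt hns hmaj).trans ?_
  rw [tsum_mul_left, real_exp_tsum]

lemma my_pow_sub_pow (x y : 𝔹) (M : ℝ) (hM : 1 ≤ M) (hx : ‖x‖ ≤ M) (hy : ‖y‖ ≤ M) :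
    ∀ n : ℕ, ‖x ^ n - y ^ n‖ ≤ n * M ^ n * ‖x - y‖ := by
  intro n
  induction n with
  | zero => simp
  | succ n ih =>
    have hid : x ^ (n + 1) - y ^ (n + 1) = x * (x ^ n - y ^ n) + (x - y) * y ^ n := by
      rw [mul_sub, sub_mul, pow_succ', pow_succ']; abel
    have h1 : ‖x * (x ^ n - y ^ n)‖ ≤ M * (n * M ^ n * ‖x - y‖) := by
      calc ‖x * (x ^ n - y ^ n)‖ ≤ ‖x‖ * ‖x ^ n - y ^ n‖ := norm_mul_le _ _
        _ ≤ M * (n * M ^ n * ‖x - y‖) := by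
            apply mul_le_mul hx ih (norm_nonneg _) (by linarith)
    have h2 : ‖(x - y) * y ^ n‖ ≤ ‖x - y‖ * M ^ n := by
      calc ‖(x - y) * y ^ n‖ ≤ ‖x - y‖ * ‖y ^ n‖ := norm_mul_le _ _
        _ ≤ ‖x - y‖ * M ^ n := by
            gcongr
            exact (norm_pow_le y n).trans (pow_le_pow_left₀ (norm_nonneg y) hy n)
    calc ‖x ^ (n + 1) - y ^ (n + 1)‖ ≤ M * (n * M ^ n * ‖x - y‖) + ‖x - y‖ * M ^ n := by
          rw [hid]; exact (norm_add_le _ _).trans (by gcongr)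
      _ ≤ (n + 1 : ℕ) * M ^ (n + 1) * ‖x - y‖ := by
          have hMn : (0:ℝ) < M ^ n := by positivity
          have hd : (0:ℝ) ≤ ‖x - y‖ := norm_nonneg _
          have key : ‖x - y‖ * M ^ n ≤ M ^ n * M * ‖x - y‖ := by nlinarith [mul_nonneg (mul_nonneg hMn.le hd) (sub_nonneg.2 hM)]
          push_cast
          rw [pow_succ]
          nlinarith


lemma my_defect (x y : 𝔹) (r R : ℝ) (hr : 0 ≤ r) (hrR : r ≤ R)
    (hx : ‖x‖ ≤ r) (hy : ‖y‖ ≤ r) :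
    ‖exp x * exp y - exp (x + y)‖ ≤
      (1 + 2 * Real.exp R + 2 * R * Real.exp R + R ^ 2 * Real.exp (2 * R)
        + 4 * Real.exp (2 * R)) * r ^ 2 := by
  have hR : 0 ≤ R := hr.trans hrR
  set Ex := exp x - 1 - x with hEx_def
  set Ey := exp y - 1 - y with hEy_def
  set Exy := exp (x + y) - 1 - (x + y) with hExy_def
  have hex : exp x = 1 + x + Ex := by rw [hEx_def]; abel
  have hey : exp y = 1 + y + Ey := by rw [hEy_def]; abel
  have hexy : exp (x + y) = 1 + (x + y) + Exy := by rw [hExy_def]; abel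
  have key : exp x * exp y - exp (x + y)
      = x * y + x * Ey + Ex * (1 + y + Ey) + Ey - Exy := by
    rw [hex, hey, hexy]; noncomm_ring
  have heR : ∀ z : ℝ, z ≤ R → Real.exp z ≤ Real.exp R := fun z hz => Real.exp_le_exp.2 hz
  have hEx : ‖Ex‖ ≤ r ^ 2 * Real.exp R := by
    refine (my_exp_remainder x).trans ?_
    have h := heR ‖x‖ (hx.trans hrR)
    have h2 := hx.trans hrR
    gcongr
  have hEy : ‖Ey‖ ≤ r ^ 2 * Real.exp R := by
    refine (my_exp_remainder y).trans ?_
    have h := heR ‖y‖ (hy.trans hrR)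
    have h2 := hy.trans hrR
    gcongr
  have hxy2 : ‖x + y‖ ≤ 2 * r := (norm_add_le x y).trans (by linarith)
  have hExy : ‖Exy‖ ≤ 4 * Real.exp (2 * R) * r ^ 2 := by
    refine (my_exp_remainder (x + y)).trans ?_
    have h1 : ‖x + y‖ ^ 2 ≤ (2 * r) ^ 2 := by
      apply pow_le_pow_left₀ (norm_nonneg _) hxy2
    have h2 : Real.exp ‖x + y‖ ≤ Real.exp (2 * R) := Real.exp_le_exp.2 (hxy2.trans (by linarith))
    calc ‖x + y‖ ^ 2 * Real.exp ‖x + y‖ ≤ (2 * r) ^ 2 * Real.exp (2 * R) := by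
          apply mul_le_mul h1 h2 (Real.exp_pos _).le (by positivity)
      _ = 4 * Real.exp (2 * R) * r ^ 2 := by ring
  have heRpos : (0:ℝ) < Real.exp R := Real.exp_pos _
  have hrR2 : r ^ 2 ≤ R * r := by nlinarith
  have t1 : ‖x * y‖ ≤ r ^ 2 := by
    calc ‖x * y‖ ≤ ‖x‖ * ‖y‖ := norm_mul_le _ _
      _ ≤ r * r := mul_le_mul hx hy (norm_nonneg _) hr
      _ = r ^ 2 := by ring
  have t2 : ‖x * Ey‖ ≤ R * Real.exp R * r ^ 2 := by
    calc ‖x * Ey‖ ≤ ‖x‖ * ‖Ey‖ := norm_mul_le _ _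
      _ ≤ r * (r ^ 2 * Real.exp R) := by
          apply mul_le_mul hx hEy (norm_nonneg _) hr
      _ ≤ R * Real.exp R * r ^ 2 := by
          nlinarith [mul_le_mul_of_nonneg_right hrR (mul_nonneg (mul_nonneg hr hr) heRpos.le)]
  have t3 : ‖Ex * (1 + y + Ey)‖ ≤
      (Real.exp R + R * Real.exp R + R ^ 2 * Real.exp (2 * R)) * r ^ 2 := by
    have hbound : ‖(1 : 𝔹) + y + Ey‖ ≤ 1 + R + R ^ 2 * Real.exp R := by
      refine (norm_add_le _ _).trans ?_
      have : ‖(1 : 𝔹) + y‖ ≤ 1 + R := by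
        refine (norm_add_le _ _).trans ?_
        rw [norm_one]
        linarith [hy.trans hrR]
      have hEy' : ‖Ey‖ ≤ R ^ 2 * Real.exp R := by
        refine hEy.trans ?_
        gcongr
      linarith
    calc ‖Ex * (1 + y + Ey)‖ ≤ ‖Ex‖ * ‖(1 : 𝔹) + y + Ey‖ := norm_mul_le _ _
      _ ≤ (r ^ 2 * Real.exp R) * (1 + R + R ^ 2 * Real.exp R) := by
          apply mul_le_mul hEx hbound (norm_nonneg _) (by positivity)
      _ = (Real.exp R + R * Real.exp R + R ^ 2 * Real.exp (2 * R)) * r ^ 2 := by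
          have hee : Real.exp R * Real.exp R = Real.exp (2 * R) := by
            rw [← Real.exp_add]; ring_nf
          rw [← hee]; ring
  calc ‖exp x * exp y - exp (x + y)‖
      = ‖x * y + x * Ey + Ex * (1 + y + Ey) + Ey - Exy‖ := by rw [key]
    _ ≤ ‖x * y + x * Ey + Ex * (1 + y + Ey) + Ey‖ + ‖Exy‖ := norm_sub_le _ _
    _ ≤ ‖x * y + x * Ey + Ex * (1 + y + Ey)‖ + ‖Ey‖ + ‖Exy‖ := by
        gcongr; exact norm_add_le _ _
    _ ≤ ‖x * y + x * Ey‖ + ‖Ex * (1 + y + Ey)‖ + ‖Ey‖ + ‖Exy‖ := by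
        gcongr; exact norm_add_le _ _
    _ ≤ ‖x * y‖ + ‖x * Ey‖ + ‖Ex * (1 + y + Ey)‖ + ‖Ey‖ + ‖Exy‖ := by
        gcongr; exact norm_add_le _ _
    _ ≤ (1 + 2 * Real.exp R + 2 * R * Real.exp R + R ^ 2 * Real.exp (2 * R)
        + 4 * Real.exp (2 * R)) * r ^ 2 := by nlinarith [hEy, hExy, t1, t2, t3]

end aux2

set_option maxHeartbeats 1000000 in
theorem key_trotter (𝔹 : Type*) [NormedRing 𝔹] [NormedAlgebra ℂ 𝔹] [CompleteSpace 𝔹]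
    [NormOneClass 𝔹] (a b : 𝔹) (T : ℝ) (hT : 0 < T) :
    ∃ C : ℝ, 0 ≤ C ∧ ∀ n : ℕ, 1 ≤ n → ∀ τ ∈ Set.Icc (0 : ℝ) T,
      ‖(exp ((-(τ / n) : ℂ) • a) * exp ((-(τ / n) : ℂ) • b)) ^ n
          - exp ((-τ : ℂ) • (a + b))‖ ≤ C / n := by
  set A := ‖a‖ + ‖b‖ with hA_def
  have hA : 0 ≤ A := by positivity
  set R := T * A with hR_def
  have hR : 0 ≤ R := by positivity
  set K := 1 + 2 * Real.exp R + 2 * R * Real.exp R + R ^ 2 * Real.exp (2 * R)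
      + 4 * Real.exp (2 * R) with hK_def
  have hK : 0 ≤ K := by positivity
  refine ⟨Real.exp R * K * R ^ 2, by positivity, ?_⟩
  intro n hn τ hτ
  obtain ⟨hτ0, hτT⟩ := hτ
  have hn0 : (0 : ℝ) < n := by exact_mod_cast Nat.lt_of_lt_of_le Nat.zero_lt_one hn
  set t : ℝ := τ / n with ht_def
  have ht0 : 0 ≤ t := div_nonneg hτ0 hn0.le
  have htτ : t ≤ τ := div_le_self hτ0 (by exact_mod_cast hn)
  have htT : t ≤ T := htτ.trans hτT
  have hnt : (n : ℝ) * t = τ := by rw [ht_def]; field_simp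
  have hc : (-(↑τ / ↑n) : ℂ) = ((-t : ℝ) : ℂ) := by rw [ht_def]; push_cast; ring
  have hnorm_smul : ∀ u : 𝔹, ‖(-(↑τ / ↑n) : ℂ) • u‖ = t * ‖u‖ := by
    intro u
    rw [norm_smul, hc, Complex.norm_real, Real.norm_eq_abs, abs_neg, abs_of_nonneg ht0]
  set S := exp ((-(τ / n) : ℂ) • a) * exp ((-(τ / n) : ℂ) • b) with hS_def
  set U := exp ((-(τ / n) : ℂ) • (a + b)) with hU_def
  have hUn : exp ((-τ : ℂ) • (a + b)) = U ^ n := by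
    have hnne : (n : ℂ) ≠ 0 := Nat.cast_ne_zero.2 (by omega)
    have hsc : ((n : ℂ)) * (-(↑τ / ↑n)) = (-τ : ℂ) := by field_simp
    let +nondep : NormedAlgebra ℚ 𝔹 := .restrictScalars ℚ ℂ 𝔹
    rw [hU_def, ← exp_nsmul, ← Nat.cast_smul_eq_nsmul ℂ, smul_smul, hsc]
  have hSnorm : ‖S‖ ≤ Real.exp (t * A) := by
    calc ‖S‖ ≤ ‖exp ((-(τ / n) : ℂ) • a)‖ * ‖exp ((-(τ / n) : ℂ) • b)‖ := norm_mul_le _ _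
      _ ≤ Real.exp ‖(-(τ / n) : ℂ) • a‖ * Real.exp ‖(-(τ / n) : ℂ) • b‖ := by
          apply mul_le_mul (my_norm_exp_le _) (my_norm_exp_le _) (norm_nonneg _)
            (Real.exp_pos _).le
      _ = Real.exp (t * ‖a‖ + t * ‖b‖) := by rw [hnorm_smul, hnorm_smul, Real.exp_add]
      _ = Real.exp (t * A) := by rw [hA_def]; ring_nf
  have hUnorm : ‖U‖ ≤ Real.exp (t * A) := by
    refine (my_norm_exp_le _).trans ?_
    apply Real.exp_le_exp.2
    rw [hnorm_smul]
    have := norm_add_le a b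
    rw [hA_def]
    nlinarith
  have hM1 : 1 ≤ Real.exp (t * A) := Real.one_le_exp (by positivity)
  have hSU : ‖S - U‖ ≤ K * (t * A) ^ 2 := by
    have hsmul_add : (-(τ / n) : ℂ) • (a + b) = (-(τ / n) : ℂ) • a + (-(τ / n) : ℂ) • b :=
      smul_add _ _ _
    rw [hS_def, hU_def, hsmul_add]
    have hra : ‖(-(τ / n) : ℂ) • a‖ ≤ t * A := by
      rw [hnorm_smul]; rw [hA_def]; nlinarith [norm_nonneg b]
    have hrb : ‖(-(τ / n) : ℂ) • b‖ ≤ t * A := by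
      rw [hnorm_smul]; rw [hA_def]; nlinarith [norm_nonneg a]
    have hrR' : t * A ≤ R := by rw [hR_def]; nlinarith
    have := my_defect ((-(τ / n) : ℂ) • a) ((-(τ / n) : ℂ) • b) (t * A) R
      (by positivity) hrR' hra hrb
    calc ‖exp ((-(τ / n) : ℂ) • a) * exp ((-(τ / n) : ℂ) • b)
        - exp ((-(τ / n) : ℂ) • a + (-(τ / n) : ℂ) • b)‖
        ≤ (1 + 2 * Real.exp R + 2 * R * Real.exp R + R ^ 2 * Real.exp (2 * R)
          + 4 * Real.exp (2 * R)) * (t * A) ^ 2 := this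
      _ = K * (t * A) ^ 2 := by rw [hK_def]
  have hpow : ‖S ^ n - U ^ n‖ ≤ n * (Real.exp (t * A)) ^ n * ‖S - U‖ :=
    my_pow_sub_pow S U (Real.exp (t * A)) hM1 hSnorm hUnorm n
  have hexp_pow : (Real.exp (t * A)) ^ n = Real.exp (τ * A) := by
    rw [← Real.exp_nat_mul]
    congr 1
    rw [← hnt]; ring
  rw [hUn]
  refine hpow.trans ?_
  have h1 : Real.exp (τ * A) ≤ Real.exp R := Real.exp_le_exp.2 (by rw [hR_def]; nlinarith)
  have h2 : ‖S - U‖ ≤ K * (R / n) ^ 2 := by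
    refine hSU.trans ?_
    have : t * A ≤ R / n := by
      rw [ht_def, hR_def, div_mul_eq_mul_div]
      gcongr
    have h3 : (t * A) ^ 2 ≤ (R / n) ^ 2 := by
      apply pow_le_pow_left₀ (by positivity) this
    nlinarith
  calc (n : ℝ) * (Real.exp (t * A)) ^ n * ‖S - U‖
      ≤ (n : ℝ) * Real.exp R * (K * (R / n) ^ 2) := by
        rw [hexp_pow]
        apply mul_le_mul (by gcongr) h2 (norm_nonneg _) (by positivity)
    _ = Real.exp R * K * R ^ 2 / n := by field_simp

noncomputable def Lreg (𝒜 : Type*) [NormedRing 𝒜] [NormedAlgebra ℂ 𝒜] :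
    𝒜 →+* (𝒜 →L[ℂ] 𝒜) where
  toFun := ContinuousLinearMap.mul ℂ 𝒜
  map_one' := by ext z; simp
  map_mul' x y := by ext z; simp [mul_assoc]
  map_zero' := by ext z; simp
  map_add' x y := by ext z; simp [add_mul]


/-- **Lie product formula with rate `O(1/n)` in a Banach algebra.**
For elements `a, b` of a complex unital Banach algebra and any `T > 0`, there is a
constant `C ≥ 0` such that for all `n ≥ 1`,
`sup_{τ ∈ [0,T]} ‖(exp(−(τ/n)a) exp(−(τ/n)b))^n − exp(−τ(a+b))‖ ≤ C/n`. -/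
theorem lie_trotter_bounded_rate
    (𝒜 : Type*) [NormedRing 𝒜] [NormedAlgebra ℂ 𝒜] [CompleteSpace 𝒜]
    (a b : 𝒜) (T : ℝ) (hT : 0 < T) :
    ∃ C : ℝ, 0 ≤ C ∧ ∀ n : ℕ, 1 ≤ n → ∀ τ ∈ Set.Icc (0 : ℝ) T,
      ‖(exp ((-(τ / n) : ℂ) • a) * exp ((-(τ / n) : ℂ) • b)) ^ n
          - exp ((-τ : ℂ) • (a + b))‖ ≤ C / n := by
  rcases subsingleton_or_nontrivial 𝒜 with hsub | hnt
  · refine ⟨0, le_refl 0, ?_⟩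
    intro n hn τ hτ
    have hz : ∀ x : 𝒜, x = 0 := fun x => Subsingleton.elim x 0
    rw [hz ((exp ((-(τ / n) : ℂ) • a) * exp ((-(τ / n) : ℂ) • b)) ^ n
          - exp ((-τ : ℂ) • (a + b))), norm_zero]
    positivity
  · have hcont : Continuous (Lreg 𝒜) := (ContinuousLinearMap.mul ℂ 𝒜).continuous
    have hsmul : ∀ (c : ℂ) (x : 𝒜), Lreg 𝒜 (c • x) = c • Lreg 𝒜 x :=
      fun c x => (ContinuousLinearMap.mul ℂ 𝒜).map_smul c x
    have hexp : ∀ x : 𝒜, Lreg 𝒜 (exp x) = exp (Lreg 𝒜 x) :=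
      fun x => by
        let +nondep : NormedAlgebra ℚ 𝒜 := .restrictScalars ℚ ℂ 𝒜
        let +nondep : NormedAlgebra ℚ (𝒜 →L[ℂ] 𝒜) := .restrictScalars ℚ ℂ _
        exact map_exp (Lreg 𝒜) hcont x
    obtain ⟨C, hC0, hC⟩ := key_trotter (𝒜 →L[ℂ] 𝒜) (Lreg 𝒜 a) (Lreg 𝒜 b) T hT
    refine ⟨C * ‖(1 : 𝒜)‖, mul_nonneg hC0 (norm_nonneg _), ?_⟩
    intro n hn τ hτ
    have hkey := hC n hn τ hτ
    set Z : 𝒜 := (exp ((-(τ / n) : ℂ) • a) * exp ((-(τ / n) : ℂ) • b)) ^ n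
        - exp ((-τ : ℂ) • (a + b)) with hZ
    have hφZ : Lreg 𝒜 Z = (exp ((-(τ / n) : ℂ) • Lreg 𝒜 a)
        * exp ((-(τ / n) : ℂ) • Lreg 𝒜 b)) ^ n
        - exp ((-τ : ℂ) • (Lreg 𝒜 a + Lreg 𝒜 b)) := by
      rw [hZ, map_sub, map_pow, map_mul, hexp, hexp, hexp, hsmul, hsmul, hsmul, map_add]
    have h1 : ‖Z‖ ≤ ‖Lreg 𝒜 Z‖ * ‖(1 : 𝒜)‖ := by
      have happ : Lreg 𝒜 Z 1 = Z := mul_one Z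
      calc ‖Z‖ = ‖Lreg 𝒜 Z 1‖ := by rw [happ]
        _ ≤ ‖Lreg 𝒜 Z‖ * ‖(1 : 𝒜)‖ := (Lreg 𝒜 Z).le_opNorm 1
    refine h1.trans ?_
    calc ‖Lreg 𝒜 Z‖ * ‖(1 : 𝒜)‖ ≤ (C / n) * ‖(1 : 𝒜)‖ := by
          apply mul_le_mul_of_nonneg_right _ (norm_nonneg _)
          rw [hφZ]; exact hkey
      _ = C * ‖(1 : 𝒜)‖ / n := by ring
end

section
/- Let (δ_n)_{n≥1} be a sequence of positive real numbers with δ_n → 0 as n → ∞. Then there exists a continuous function q : [0,1] → ℝ such that limsup_{n→∞} ( sup_{(t,s)∈Δ} |D_n(q;t,s)| ) / δ_n = ∞; that is, the uniform Riemann-sum approximation error of q over all subintervals of [0,1] tends to zero more slowly than any prescribed rate. -/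
open intervalIntegral Finset Filter

/-- The left-endpoint Riemann sum `R_n(q;t,s) = ((t−s)/n)·Σ_{k<n} q(s + k(t−s)/n)`. -/
noncomputable def riemannSum (q : ℝ → ℝ) (n : ℕ) (t s : ℝ) : ℝ :=
  ((t - s) / n) * ∑ k ∈ Finset.range n, q (s + k * (t - s) / n)

/-- The error `D_n(q;t,s) = ∫_s^t q − R_n(q;t,s)`. -/
noncomputable def intError (q : ℝ → ℝ) (n : ℕ) (t s : ℝ) : ℝ :=
  (∫ y in s..t, q y) - riemannSum q n t s

/-- `sup_{(t,s) ∈ Δ} |D_n(q;t,s)|`, the supremum of the Riemann-sum error over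
the triangle `Δ = {(t,s) : 0 ≤ s ≤ t ≤ 1}`. -/
noncomputable def supError (q : ℝ → ℝ) (n : ℕ) : ℝ :=
  ⨆ p : {p : ℝ × ℝ // 0 ≤ p.2 ∧ p.2 ≤ p.1 ∧ p.1 ≤ 1}, |intError q n p.1.1 p.1.2|

section Aux

open Real MeasureTheory

/-- Sum of cosines at roots of unity. -/
lemma RSaux_cos_sum_eq (N M : ℕ) (hN : 0 < N) :
    ∑ i ∈ Finset.range N, Real.cos (2 * π * M * (i / N)) =
      if N ∣ M then (N : ℝ) else 0 := by
  by_cases h : N ∣ M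
  · obtain ⟨d, rfl⟩ := h
    rw [if_pos ⟨d, rfl⟩]
    have : ∀ i ∈ Finset.range N, Real.cos (2 * π * (N * d : ℕ) * (i / N)) = 1 := by
      intro i _
      have hN' : (N : ℝ) ≠ 0 := Nat.cast_ne_zero.2 hN.ne'
      have : (2 * π * (N * d : ℕ) * (i / N) : ℝ) = ((d * i : ℕ) : ℝ) * (2 * π) := by
        push_cast
        field_simp
      rw [this]
      exact_mod_cast Real.cos_nat_mul_two_pi (d * i)
    rw [Finset.sum_congr rfl this]
    simp
  · rw [if_neg h]
    have hN' : (N : ℝ) ≠ 0 := Nat.cast_ne_zero.2 hN.ne'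
    set z : ℂ := Complex.exp ((2 * π * M / N : ℝ) * Complex.I) with hz
    have hzpow : ∀ i : ℕ, z ^ i = Complex.exp ((2 * π * M * (i / N) : ℝ) * Complex.I) := by
      intro i
      rw [hz, ← Complex.exp_nat_mul]
      congr 1
      push_cast
      ring
    have hzne : z ≠ 1 := by
      intro hz1
      rw [hz, Complex.exp_eq_one_iff] at hz1
      obtain ⟨n, hn⟩ := hz1
      have hn' : ((2 * π * M / N : ℝ) : ℂ) * Complex.I = ((n : ℂ) * (2 * π)) * Complex.I := by
        rw [hn]; ring
      have hc := mul_right_cancel₀ Complex.I_ne_zero hn'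
      have hr : (2 * π * M / N : ℝ) = n * (2 * π) := by exact_mod_cast hc
      have h2π : (2 * π : ℝ) ≠ 0 := by positivity
      have hMeq : (M : ℝ) = n * N := by
        field_simp at hr
        linear_combination hr
      have hdvd : (N : ℤ) ∣ (M : ℤ) :=
        ⟨n, by exact_mod_cast hMeq.trans (mul_comm (n : ℝ) N)⟩
      exact h (Int.ofNat_dvd.mp (by exact_mod_cast hdvd))
    have hgeom : ∑ i ∈ Finset.range N, z ^ i = 0 := by
      rw [geom_sum_eq hzne]
      have hzN : z ^ N = 1 := by
        rw [hzpow N]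
        have harg : ((2 * π * (M:ℝ) * ((N:ℝ) / N) : ℝ) : ℂ) * Complex.I
            = ((M : ℤ) : ℂ) * (2 * ↑π * Complex.I) := by
          have hNc : (N : ℂ) ≠ 0 := Nat.cast_ne_zero.2 hN.ne'
          push_cast
          field_simp
        rw [harg, Complex.exp_int_mul_two_pi_mul_I]
      rw [hzN]
      simp
    have : ∑ i ∈ Finset.range N, Real.cos (2 * π * M * (i / N)) =
        (∑ i ∈ Finset.range N, z ^ i).re := by
      rw [Complex.re_sum]
      refine Finset.sum_congr rfl fun i _ => ?_
      rw [hzpow i, Complex.exp_ofReal_mul_I_re]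
    rw [this, hgeom, Complex.zero_re]

lemma RSaux_integral_cos_two_pi (n : ℕ) (hn : 0 < n) :
    ∫ x in (0:ℝ)..1, Real.cos (2 * π * n * x) = 0 := by
  have hc : (2 * π * n : ℝ) ≠ 0 := by positivity
  have := intervalIntegral.integral_comp_mul_left (a := (0:ℝ)) (b := 1) Real.cos hc
  rw [this, integral_cos]
  have h1 : (2 * π * (n:ℝ) * 1) = (2 * n : ℕ) * π := by push_cast; ring
  have h0 : (2 * π * (n:ℝ) * 0) = 0 := by ring
  rw [h1, h0, Real.sin_nat_mul_pi, Real.sin_zero]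
  simp

/-- coefficients -/
noncomputable def RScc (j : ℕ) : ℝ := (1/2 : ℝ) ^ (j + 1)

/-- building-block cosines -/
noncomputable def RSff (m : ℕ → ℕ) (j : ℕ) (x : ℝ) : ℝ :=
  RScc j * Real.cos (2 * π * (2 ^ m j : ℕ) * x)

/-- the bad function -/
noncomputable def RSqq (m : ℕ → ℕ) (x : ℝ) : ℝ := ∑' j, RSff m j x

lemma RScc_pos (j : ℕ) : 0 < RScc j := by rw [RScc]; positivity

lemma RScc_summable : Summable (fun j => RScc j) := by
  have : Summable (fun j : ℕ => (1/2 : ℝ) ^ j) :=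
    summable_geometric_of_lt_one (by norm_num) (by norm_num)
  simpa [RScc, pow_succ, mul_comm] using this.mul_right (1/2 : ℝ)

lemma RScc_tsum : ∑' j, RScc j = 1 := by
  have h := tsum_geometric_two' 1
  have he : (fun j : ℕ => (1:ℝ) / 2 / 2 ^ j) = RScc := by
    funext j
    rw [RScc, pow_succ, div_div, one_div, mul_inv, ← one_div, div_pow]
    ring_nf
  rwa [he] at h

lemma RSff_bound (m : ℕ → ℕ) (j : ℕ) (x : ℝ) : ‖RSff m j x‖ ≤ RScc j := by
  rw [RSff, norm_mul]
  calc ‖RScc j‖ * ‖Real.cos (2 * π * (2 ^ m j : ℕ) * x)‖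
      ≤ ‖RScc j‖ * 1 := by gcongr; exact Real.abs_cos_le_one _
    _ = RScc j := by rw [mul_one, Real.norm_eq_abs, abs_of_pos (RScc_pos j)]

lemma RSff_cont (m : ℕ → ℕ) (j : ℕ) : Continuous (RSff m j) :=
  continuous_const.mul (Real.continuous_cos.comp (by continuity))

lemma RSff_summable (m : ℕ → ℕ) (x : ℝ) : Summable (fun j => RSff m j x) :=
  Summable.of_norm_bounded RScc_summable (fun j => RSff_bound m j x)

lemma RSqq_cont (m : ℕ → ℕ) : Continuous (RSqq m) :=
  continuous_tsum (RSff_cont m) RScc_summable (RSff_bound m)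

lemma RSqq_bound (m : ℕ → ℕ) (x : ℝ) : |RSqq m x| ≤ 1 := by
  rw [RSqq, ← Real.norm_eq_abs, ← RScc_tsum]
  exact norm_tsum_le_tsum_norm
    ((RSff_summable m x).abs.congr (fun j => (Real.norm_eq_abs _).symm)) |>.trans
    (Summable.tsum_le_tsum (fun j => RSff_bound m j x)
      ((RSff_summable m x).abs.congr (fun j => (Real.norm_eq_abs _).symm)) RScc_summable)

lemma RSff_integral (m : ℕ → ℕ) (j : ℕ) : ∫ y in (0:ℝ)..1, RSff m j y = 0 := by
  have h := RSaux_integral_cos_two_pi (2 ^ m j) (Nat.pow_pos two_pos)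
  rw [show RSff m j = fun y => RScc j * Real.cos (2 * π * (2 ^ m j : ℕ) * y) from rfl]
  rw [intervalIntegral.integral_const_mul, h, mul_zero]

lemma RSqq_integral (m : ℕ → ℕ) : ∫ y in (0:ℝ)..1, RSqq m y = 0 := by
  have hμ : (volume (Set.Ioc (0:ℝ) 1)) = 1 := by
    rw [Real.volume_Ioc]; norm_num
  rw [intervalIntegral.integral_of_le zero_le_one]
  have hint : ∀ j, IntegrableOn (RSff m j) (Set.Ioc (0:ℝ) 1) volume :=
    fun j => (RSff_cont m j).integrableOn_Ioc
  have hsum : Summable fun j => ∫ a in Set.Ioc (0:ℝ) 1, ‖RSff m j a‖ := by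
    apply Summable.of_nonneg_of_le (fun j => integral_nonneg (fun a => norm_nonneg _))
      (fun j => ?_) RScc_summable
    calc ∫ a in Set.Ioc (0:ℝ) 1, ‖RSff m j a‖
        ≤ ∫ _ in Set.Ioc (0:ℝ) 1, RScc j := by
          apply integral_mono (hint j).norm
          · exact integrableOn_const (by rw [hμ]; exact ENNReal.one_ne_top)
          · exact fun a => RSff_bound m j a
      _ = RScc j := by rw [MeasureTheory.integral_const]; simp [hμ]
  have := MeasureTheory.integral_tsum_of_summable_integral_norm hint hsum
  rw [show RSqq m = fun x => ∑' j, RSff m j x from rfl, ← this]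
  have : ∀ j : ℕ, ∫ a in Set.Ioc (0:ℝ) 1, RSff m j a = 0 := by
    intro j
    have := RSff_integral m j
    rwa [intervalIntegral.integral_of_le zero_le_one] at this
  simp [this]

lemma RSqq_riemann (m : ℕ → ℕ) (hm : StrictMono m) (k : ℕ) :
    ((1:ℝ) / (2 ^ m k : ℕ)) * ∑ i ∈ Finset.range (2 ^ m k), RSqq m (i / (2 ^ m k : ℕ))
      = (1/2 : ℝ) ^ k := by
  set N := 2 ^ m k with hNdef
  have hN : 0 < N := Nat.pow_pos two_pos
  have hNR : (0:ℝ) < N := by exact_mod_cast hN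
  set g : ℕ → ℝ := fun j => if k ≤ j then RScc j else 0 with hg
  have hgsum : Summable g := by
    apply Summable.of_nonneg_of_le (fun j => ?_) (fun j => ?_) RScc_summable
    · rw [hg]; dsimp only; split <;> [exact (RScc_pos j).le; exact le_rfl]
    · rw [hg]; dsimp only; split <;> [exact le_rfl; exact (RScc_pos j).le]
  have hswap : ∑ i ∈ Finset.range N, RSqq m (i / (N:ℝ))
      = ∑' j, ∑ i ∈ Finset.range N, RSff m j (i / (N:ℝ)) :=
    (Summable.tsum_finsetSum (fun i _ => RSff_summable m _)).symm
  have hterm : ∀ j, ∑ i ∈ Finset.range N, RSff m j (i / (N:ℝ)) = (N:ℝ) * g j := by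
    intro j
    have hcs := RSaux_cos_sum_eq N (2 ^ m j) hN
    have hdvd : (N ∣ 2 ^ m j) ↔ (k ≤ j) := by
      rw [hNdef, Nat.pow_dvd_pow_iff_le_right one_lt_two, hm.le_iff_le]
    rw [show (fun i : ℕ => RSff m j (i / (N:ℝ)))
        = fun i : ℕ => RScc j * Real.cos (2 * π * (2 ^ m j : ℕ) * (i / (N:ℝ))) from rfl] at *
    rw [← Finset.mul_sum, hcs, hg]
    dsimp only
    rw [if_congr hdvd rfl rfl]
    split <;> ring
  have htail : ∑' j, g j = (1/2 : ℝ) ^ k := by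
    rw [← Summable.sum_add_tsum_nat_add k hgsum]
    have h1 : ∑ i ∈ Finset.range k, g i = 0 := by
      apply Finset.sum_eq_zero
      intro i hi
      rw [hg]; dsimp only
      have := Finset.mem_range.mp hi
      rw [if_neg (by omega)]
    have h2 : ∀ i, g (i + k) = (1/2:ℝ)^k * RScc i := by
      intro i
      rw [hg]; dsimp only
      rw [if_pos (Nat.le_add_left k i), RScc, RScc, ← pow_add,
        show k + (i+1) = i + k + 1 from by omega]
    rw [h1, zero_add, tsum_congr h2, tsum_mul_left, RScc_tsum, mul_one]
  rw [hswap, tsum_congr hterm, tsum_mul_left, htail, ← mul_assoc]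
  field_simp

lemma RSriemann_bound (m : ℕ → ℕ) {n : ℕ} {t s : ℝ} (hs : 0 ≤ s) (hst : s ≤ t) (ht : t ≤ 1) :
    |riemannSum (RSqq m) n t s| ≤ 1 := by
  rw [riemannSum, abs_mul]
  rcases Nat.eq_zero_or_pos n with h0 | h0
  · subst h0; simp
  · have hnR : (0:ℝ) < n := by exact_mod_cast h0
    have hsum : |∑ i ∈ Finset.range n, RSqq m (s + i * (t - s) / n)| ≤ (n : ℝ) := by
      refine (Finset.abs_sum_le_sum_abs _ _).trans ?_
      calc ∑ i ∈ Finset.range n, |RSqq m (s + i * (t - s) / n)|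
          ≤ ∑ _i ∈ Finset.range n, (1:ℝ) := Finset.sum_le_sum (fun i _ => RSqq_bound m _)
        _ = (n : ℝ) := by simp
    calc |(t - s) / ↑n| * |∑ i ∈ Finset.range n, RSqq m (s + ↑i * (t - s) / ↑n)|
        ≤ |(t - s) / ↑n| * n := by gcongr
      _ = (t - s) := by
          rw [abs_of_nonneg (div_nonneg (by linarith) hnR.le)]
          field_simp
      _ ≤ 1 := by linarith

lemma RSintError_bound (m : ℕ → ℕ) {n : ℕ} {t s : ℝ} (hs : 0 ≤ s) (hst : s ≤ t) (ht : t ≤ 1) :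
    |intError (RSqq m) n t s| ≤ 2 := by
  rw [intError]
  have hI : |∫ y in s..t, RSqq m y| ≤ 1 := by
    have := intervalIntegral.norm_integral_le_of_norm_le_const
      (a := s) (b := t) (C := 1) (f := RSqq m)
      (fun x _ => by rw [Real.norm_eq_abs]; exact RSqq_bound m x)
    rw [Real.norm_eq_abs] at this
    refine this.trans ?_
    rw [abs_of_nonneg (by linarith)]
    linarith
  have hR := RSriemann_bound m (n := n) hs hst ht
  rw [sub_eq_add_neg]
  refine (abs_add_le _ _).trans ?_
  rw [abs_neg]
  linarith

lemma RSsupError_ge (m : ℕ → ℕ) (n : ℕ) :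
    |intError (RSqq m) n 1 0| ≤ supError (RSqq m) n := by
  have hbdd : BddAbove (Set.range
      fun p : {p : ℝ × ℝ // 0 ≤ p.2 ∧ p.2 ≤ p.1 ∧ p.1 ≤ 1} => |intError (RSqq m) n p.1.1 p.1.2|) := by
    refine ⟨2, ?_⟩
    rintro x ⟨p, rfl⟩
    exact RSintError_bound m p.2.1 p.2.2.1 p.2.2.2
  exact le_ciSup hbdd (⟨(1, 0), by norm_num⟩ :
    {p : ℝ × ℝ // 0 ≤ p.2 ∧ p.2 ≤ p.1 ∧ p.1 ≤ 1})

lemma RSintError_value (m : ℕ → ℕ) (hm : StrictMono m) (k : ℕ) :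
    |intError (RSqq m) (2 ^ m k) 1 0| = (1/2 : ℝ) ^ k := by
  have hRS : riemannSum (RSqq m) (2 ^ m k) 1 0
      = ((1:ℝ) / (2 ^ m k : ℕ)) * ∑ i ∈ Finset.range (2 ^ m k), RSqq m (i / (2 ^ m k : ℕ)) := by
    rw [riemannSum]
    congr 1
    · norm_num
    · refine Finset.sum_congr rfl fun i _ => ?_
      norm_num
  rw [intError, RSqq_integral, hRS, RSqq_riemann m hm k, zero_sub, abs_neg,
    abs_of_pos (by positivity)]

end Aux

/-- For any prescribed rate `δ_n → 0`, `δ_n > 0`, there is a continuous function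
`q : [0,1] → ℝ` whose uniform Riemann-sum error satisfies
`limsup_n (sup_{(t,s)∈Δ} |D_n(q;t,s)|)/δ_n = ∞`, i.e. it is `ω(δ_n)`. -/
theorem riemann_error_arbitrarily_slow (δ : ℕ → ℝ) (hδpos : ∀ n, 1 ≤ n → 0 < δ n)
    (hδ : Tendsto δ atTop (nhds 0)) :
    ∃ q : ℝ → ℝ, ContinuousOn q (Set.Icc (0 : ℝ) 1) ∧
      ∀ M : ℝ, ∃ᶠ n in atTop, M < supError q n / δ n := by
  have h2 : Tendsto (fun i : ℕ => δ (2 ^ i)) atTop (nhds 0) :=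
    hδ.comp (tendsto_pow_atTop_atTop_of_one_lt one_lt_two)
  obtain ⟨m, hm, hP⟩ := extraction_forall_of_eventually
    (P := fun k i => δ (2 ^ i) < (1/4 : ℝ) ^ k)
    (fun k => h2.eventually_lt_const (by positivity))
  refine ⟨RSqq m, (RSqq_cont m).continuousOn, ?_⟩
  intro M
  rw [frequently_atTop]
  intro N0
  obtain ⟨K, hK⟩ := pow_unbounded_of_one_lt M (one_lt_two (α := ℝ))
  set k := max N0 K with hk
  refine ⟨2 ^ m k, ?_, ?_⟩
  · have h1 : N0 ≤ k := le_max_left _ _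
    have h2 : k ≤ m k := hm.le_apply
    have h3 : m k < 2 ^ m k := Nat.lt_two_pow_self (n := m k)
    omega
  · have hδk : 0 < δ (2 ^ m k) := hδpos _ Nat.one_le_two_pow
    have hδlt : δ (2 ^ m k) < (1/4 : ℝ) ^ k := hP k
    have hsup : (1/2 : ℝ) ^ k ≤ supError (RSqq m) (2 ^ m k) := by
      have := RSsupError_ge m (2 ^ m k)
      rw [RSintError_value m hm k] at this
      exact this
    have e1 : ((1/2 : ℝ) ^ k) / ((1/4 : ℝ) ^ k) = 2 ^ k := by
      rw [← div_pow]; norm_num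
    have lt1 : ((1/2 : ℝ) ^ k) / ((1/4 : ℝ) ^ k) < ((1/2 : ℝ) ^ k) / δ (2 ^ m k) :=
      div_lt_div_of_pos_left (by positivity) hδk hδlt
    have le2 : ((1/2 : ℝ) ^ k) / δ (2 ^ m k) ≤ supError (RSqq m) (2 ^ m k) / δ (2 ^ m k) := by
      gcongr
    have hMk : M < (2 : ℝ) ^ k := by
      refine hK.trans_le ?_
      exact pow_le_pow_right₀ one_le_two (le_max_right _ _)
    calc M < (2 : ℝ) ^ k := hMk
      _ = ((1/2 : ℝ) ^ k) / ((1/4 : ℝ) ^ k) := e1.symm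
      _ < ((1/2 : ℝ) ^ k) / δ (2 ^ m k) := lt1
      _ ≤ supError (RSqq m) (2 ^ m k) / δ (2 ^ m k) := le2
end

section
/- Let (δ_n)_{n≥1} be a sequence of positive real numbers with δ_n → 0 as n → ∞. Then there exists a continuous nonnegative function q : [0,1] → ℝ such that limsup_{n→∞} ( sup_{(t,s)∈Δ} |exp(−∫_s^t q(y) dy) − exp(−R_n(q;t,s))| ) / δ_n = ∞. -/
open intervalIntegral Finset Filter

/-- `sup_{(t,s) ∈ Δ} |exp(−∫_s^t q) − exp(−R_n(q;t,s))|`, the supremum of the exponential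
error over the triangle `Δ = {(t,s) : 0 ≤ s ≤ t ≤ 1}`. -/
noncomputable def supExpError (q : ℝ → ℝ) (n : ℕ) : ℝ :=
  ⨆ p : {p : ℝ × ℝ // 0 ≤ p.2 ∧ p.2 ≤ p.1 ∧ p.1 ≤ 1},
    |Real.exp (-(∫ y in p.1.2..p.1.1, q y)) - Real.exp (-(riemannSum q n p.1.1 p.1.2))|

open Real

lemma sin_sq_shift (x : ℝ) (n : ℕ) : Real.sin (x + n * π) ^ 2 = Real.sin x ^ 2 := by
  rw [Real.sin_add_nat_mul_pi, mul_pow, ← pow_mul, mul_comm n 2, pow_mul]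
  norm_num

lemma sum_sin_sq_pow (M d : ℕ) (hd : 1 ≤ d) (hdM : d ≤ M) :
    ∑ k ∈ Finset.range (2 ^ M), Real.sin (π * k / 2 ^ d) ^ 2 = 2 ^ M / 2 := by
  induction M with
  | zero => omega
  | succ M ih =>
    have hsplit : (2 : ℕ) ^ (M + 1) = 2 ^ M + 2 ^ M := by ring
    rw [hsplit, Finset.sum_range_add]
    rcases eq_or_lt_of_le hdM with h | h
    · -- d = M + 1 : pair with half-shift π/2
      have key : ∀ k ∈ Finset.range (2 ^ M),
          Real.sin (π * ((2 ^ M + k : ℕ) : ℝ) / 2 ^ d) ^ 2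
            = Real.cos (π * k / 2 ^ d) ^ 2 := by
        intro k _
        have harg : π * ((2 ^ M + k : ℕ) : ℝ) / 2 ^ d = π * k / 2 ^ d + π / 2 := by
          subst h
          push_cast
          have h2 : (2 : ℝ) ^ (M + 1) = 2 * 2 ^ M := by ring
          field_simp
          ring
        rw [harg, Real.sin_add_pi_div_two]
      rw [Finset.sum_congr rfl key, ← Finset.sum_add_distrib]
      have : ∀ k ∈ Finset.range (2 ^ M),
          Real.sin (π * k / 2 ^ d) ^ 2 + Real.cos (π * k / 2 ^ d) ^ 2 = 1 := fun k _ =>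
        Real.sin_sq_add_cos_sq _
      rw [Finset.sum_congr rfl this, Finset.sum_const, nsmul_eq_mul, mul_one,
        Finset.card_range]
      push_cast
      ring
    · -- d ≤ M : second half equals first half
      have hdM' : d ≤ M := by omega
      have key : ∀ k ∈ Finset.range (2 ^ M),
          Real.sin (π * ((2 ^ M + k : ℕ) : ℝ) / 2 ^ d) ^ 2
            = Real.sin (π * k / 2 ^ d) ^ 2 := by
        intro k _
        have harg : π * ((2 ^ M + k : ℕ) : ℝ) / 2 ^ d
            = π * k / 2 ^ d + (2 ^ (M - d) : ℕ) * π := by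
          push_cast
          have h2 : (2 : ℝ) ^ M = 2 ^ d * 2 ^ (M - d) := by
            rw [← pow_add]; congr 1; omega
          field_simp [h2]
          linear_combination h2
        rw [harg, sin_sq_shift]
      rw [Finset.sum_congr rfl key, ih hdM']
      ring

lemma integral_sin_sq_freq (c : ℕ) (hc : 1 ≤ c) :
    ∫ x in (0:ℝ)..1, Real.sin ((c : ℝ) * π * x) ^ 2 = 1 / 2 := by
  have hc0 : (c : ℝ) * π ≠ 0 := by
    have : (0:ℝ) < c := by exact_mod_cast hc
    positivity
  have : (fun x : ℝ => Real.sin ((c : ℝ) * π * x) ^ 2)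
      = fun x : ℝ => (fun y => Real.sin y ^ 2) (((c : ℝ) * π) * x) := rfl
  rw [this, intervalIntegral.integral_comp_mul_left (fun y => Real.sin y ^ 2) hc0]
  rw [mul_zero, mul_one, integral_sin_sq]
  rw [Real.sin_nat_mul_pi, Real.sin_zero]
  field_simp
  simp only [smul_eq_mul, zero_mul, zero_add, sub_zero]
  field_simp

/-- For any prescribed rate `δ_n → 0`, `δ_n > 0`, there is a continuous nonnegative function
`q : [0,1] → ℝ` such that
`limsup_n (sup_{(t,s)∈Δ} |exp(−∫_s^t q) − exp(−R_n(q;t,s))|)/δ_n = ∞`. -/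
theorem exp_riemann_error_arbitrarily_slow (δ : ℕ → ℝ) (hδpos : ∀ n, 1 ≤ n → 0 < δ n)
    (hδ : Tendsto δ atTop (nhds 0)) :
    ∃ q : ℝ → ℝ, ContinuousOn q (Set.Icc (0 : ℝ) 1) ∧ (∀ x, 0 ≤ q x) ∧
      ∀ M : ℝ, ∃ᶠ n in atTop, M < supExpError q n / δ n := by
  -- Step 1: choose frequencies `2 ^ (m l)` where `δ` is very small.
  have hP : ∀ l : ℕ, ∀ᶠ n in atTop,
      (l < n ∧ δ (2 ^ n) < Real.exp (-2) * (1/2) ^ (l+1) / ((l : ℝ) + 1)) := by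
    intro l
    have hε : 0 < Real.exp (-2) * (1/2:ℝ) ^ (l+1) / ((l : ℝ) + 1) := by positivity
    have h1 : ∀ᶠ k in atTop, δ k < Real.exp (-2) * (1/2:ℝ) ^ (l+1) / ((l : ℝ) + 1) :=
      hδ.eventually_lt_const hε
    rw [eventually_atTop] at h1 ⊢
    obtain ⟨N, hN⟩ := h1
    refine ⟨max (l+1) N, fun n hn => ⟨?_, ?_⟩⟩
    · have := le_trans (le_max_left (l+1) N) hn; omega
    · refine hN _ ?_
      have h2 : N ≤ n := le_trans (le_max_right _ _) hn
      exact le_trans h2 (Nat.lt_two_pow_self (n := n)).le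
  obtain ⟨m, hmono, hm⟩ := Filter.extraction_forall_of_eventually hP
  -- Step 2: define `q`.
  set q : ℝ → ℝ :=
    fun x => ∑' i : ℕ, (1/2:ℝ) ^ i * Real.sin (((2 ^ m i : ℕ) : ℝ) * π * x) ^ 2 with hqdef
  have htermnn : ∀ (i : ℕ) (x : ℝ),
      0 ≤ (1/2:ℝ) ^ i * Real.sin (((2 ^ m i : ℕ) : ℝ) * π * x) ^ 2 := by
    intro i x; positivity
  have htermle : ∀ (i : ℕ) (x : ℝ),
      (1/2:ℝ) ^ i * Real.sin (((2 ^ m i : ℕ) : ℝ) * π * x) ^ 2 ≤ (1/2:ℝ) ^ i := by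
    intro i x
    have h1 := Real.sin_sq_le_one (((2 ^ m i : ℕ) : ℝ) * π * x)
    nlinarith [pow_pos (by norm_num : (0:ℝ) < 1/2) i]
  have hsummable : ∀ x : ℝ,
      Summable (fun i => (1/2:ℝ) ^ i * Real.sin (((2 ^ m i : ℕ) : ℝ) * π * x) ^ 2) :=
    fun x => Summable.of_nonneg_of_le (fun i => htermnn i x) (fun i => htermle i x)
      summable_geometric_two
  have hq0 : ∀ x, 0 ≤ q x := fun x => tsum_nonneg (fun i => htermnn i x)
  have hq2 : ∀ x, q x ≤ 2 := by
    intro x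
    have := Summable.tsum_le_tsum (fun i => htermle i x) (hsummable x) summable_geometric_two
    rwa [tsum_geometric_two] at this
  have hqc : Continuous q := by
    refine continuous_tsum (fun i => by fun_prop) summable_geometric_two (fun i x => ?_)
    rw [Real.norm_eq_abs, abs_of_nonneg (htermnn i x)]
    exact htermle i x
  -- Step 3: Riemann sum at `n = 2 ^ (m l)` equals `1 - (1/2)^l`.
  have hR : ∀ l, riemannSum q (2 ^ m l) 1 0 = 1 - (1/2:ℝ) ^ l := by
    intro l
    have hn0 : ((2:ℝ) ^ m l) ≠ 0 := by positivity
    have hterm : ∀ k ∈ Finset.range (2 ^ m l),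
        q ((0:ℝ) + (k : ℝ) * ((1:ℝ) - 0) / ((2 ^ m l : ℕ) : ℝ)) =
          ∑ i ∈ Finset.range l, (1/2:ℝ) ^ i * Real.sin (π * k / 2 ^ (m l - m i)) ^ 2 := by
      intro k _
      show (∑' i : ℕ, (1/2:ℝ) ^ i * Real.sin (((2 ^ m i : ℕ) : ℝ) * π *
          ((0:ℝ) + (k : ℝ) * ((1:ℝ) - 0) / ((2 ^ m l : ℕ) : ℝ))) ^ 2) = _
      rw [tsum_eq_sum (s := Finset.range l) ?_]
      · refine Finset.sum_congr rfl fun i hi => ?_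
        have hi' : m i < m l := hmono (Finset.mem_range.mp hi)
        have h2 : (2 : ℝ) ^ m l = 2 ^ m i * 2 ^ (m l - m i) := by
          rw [← pow_add]; congr 1; omega
        have harg : ((2 ^ m i : ℕ) : ℝ) * π *
            ((0:ℝ) + (k : ℝ) * ((1:ℝ) - 0) / ((2 ^ m l : ℕ) : ℝ))
            = π * (k : ℝ) / 2 ^ (m l - m i) := by
          have h3 : (2:ℝ) ^ m i ≠ 0 := by positivity
          have h4 : (2:ℝ) ^ (m l - m i) ≠ 0 := by positivity
          push_cast
          rw [h2]
          field_simp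
          ring
        rw [harg]
      · intro i hi
        have hli : l ≤ i := by simpa using hi
        have hi' : m l ≤ m i := hmono.monotone hli
        have harg : ((2 ^ m i : ℕ) : ℝ) * π *
            ((0:ℝ) + (k : ℝ) * ((1:ℝ) - 0) / ((2 ^ m l : ℕ) : ℝ))
            = ((2 ^ (m i - m l) * k : ℕ) : ℝ) * π := by
          have h2 : (2 : ℝ) ^ m i = 2 ^ m l * 2 ^ (m i - m l) := by
            rw [← pow_add]; congr 1; omega
          push_cast
          rw [h2]
          field_simp
          ring
        rw [harg, Real.sin_nat_mul_pi]
        simp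
    show ((1 - 0) / ((2 ^ m l : ℕ) : ℝ)) *
        ∑ k ∈ Finset.range (2 ^ m l), q (0 + (k : ℝ) * (1 - 0) / ((2 ^ m l : ℕ) : ℝ))
        = 1 - (1/2:ℝ) ^ l
    rw [Finset.sum_congr rfl hterm, Finset.sum_comm]
    have hinner : ∀ i ∈ Finset.range l,
        ∑ k ∈ Finset.range (2 ^ m l), (1/2:ℝ) ^ i * Real.sin (π * k / 2 ^ (m l - m i)) ^ 2
          = (1/2:ℝ) ^ i * ((2:ℝ) ^ m l / 2) := by
      intro i hi
      have hi' : m i < m l := hmono (Finset.mem_range.mp hi)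
      rw [← Finset.mul_sum, sum_sin_sq_pow (m l) (m l - m i) (by omega) (by omega)]
    rw [Finset.sum_congr rfl hinner, ← Finset.sum_mul, geom_sum_eq (by norm_num : (1/2:ℝ) ≠ 1)]
    push_cast
    field_simp
    ring
  -- Step 4: integral bounds.
  have hqint : IntervalIntegrable q MeasureTheory.volume 0 1 := hqc.intervalIntegrable 0 1
  have hIle : ∫ y in (0:ℝ)..1, q y ≤ 2 := by
    calc ∫ y in (0:ℝ)..1, q y ≤ ∫ _ in (0:ℝ)..1, (2:ℝ) :=
          intervalIntegral.integral_mono_on (by norm_num) hqint intervalIntegrable_const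
            (fun x _ => hq2 x)
      _ = 2 := by simp
  have hIge : ∀ l : ℕ, 1 - (1/2:ℝ) ^ (l+2) ≤ ∫ y in (0:ℝ)..1, q y := by
    intro l
    have hpartcont : Continuous (fun x : ℝ =>
        ∑ i ∈ Finset.range (l+2), (1/2:ℝ) ^ i * Real.sin (((2 ^ m i : ℕ) : ℝ) * π * x) ^ 2) :=
      continuous_finset_sum _ (fun i _ => by fun_prop)
    have hval : ∫ y in (0:ℝ)..1,
        (∑ i ∈ Finset.range (l+2), (1/2:ℝ) ^ i * Real.sin (((2 ^ m i : ℕ) : ℝ) * π * y) ^ 2)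
        = ∑ i ∈ Finset.range (l+2), (1/2:ℝ) ^ i * (1/2) := by
      rw [intervalIntegral.integral_finset_sum
        (fun i _ => ((by fun_prop : Continuous (fun y : ℝ =>
          (1/2:ℝ) ^ i * Real.sin (((2 ^ m i : ℕ) : ℝ) * π * y) ^ 2))).intervalIntegrable 0 1)]
      refine Finset.sum_congr rfl fun i _ => ?_
      rw [intervalIntegral.integral_const_mul, integral_sin_sq_freq _ Nat.one_le_two_pow]
    have hmono2 : ∫ y in (0:ℝ)..1,
        (∑ i ∈ Finset.range (l+2), (1/2:ℝ) ^ i * Real.sin (((2 ^ m i : ℕ) : ℝ) * π * y) ^ 2)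
        ≤ ∫ y in (0:ℝ)..1, q y := by
      refine intervalIntegral.integral_mono_on (by norm_num)
        (hpartcont.intervalIntegrable 0 1) hqint (fun x _ => ?_)
      exact Summable.sum_le_tsum (Finset.range (l+2)) (fun i _ => htermnn i x) (hsummable x)
    have hgeom : ∑ i ∈ Finset.range (l+2), (1/2:ℝ) ^ i * (1/2) = 1 - (1/2:ℝ) ^ (l+2) := by
      rw [← Finset.sum_mul, geom_sum_eq (by norm_num : (1/2:ℝ) ≠ 1)]
      ring
    rw [hval, hgeom] at hmono2
    exact hmono2
  -- Step 5: the sup is bounded above (by 1), and bounded below at (1,0).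
  have hbdd : ∀ n : ℕ, BddAbove (Set.range fun p : {p : ℝ × ℝ // 0 ≤ p.2 ∧ p.2 ≤ p.1 ∧ p.1 ≤ 1} =>
      |Real.exp (-(∫ y in p.1.2..p.1.1, q y)) - Real.exp (-(riemannSum q n p.1.1 p.1.2))|) := by
    intro n
    refine ⟨1, ?_⟩
    rintro x ⟨⟨⟨t, s⟩, hs0, hst, ht1⟩, rfl⟩
    simp only
    have h1 : 0 ≤ ∫ y in s..t, q y := intervalIntegral.integral_nonneg hst (fun u _ => hq0 u)
    have h2 : 0 ≤ riemannSum q n t s := by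
      refine mul_nonneg (div_nonneg (by linarith) (Nat.cast_nonneg n)) ?_
      exact Finset.sum_nonneg fun k _ => hq0 _
    have e1 : Real.exp (-(∫ y in s..t, q y)) ≤ 1 := Real.exp_le_one_iff.mpr (by linarith)
    have e2 : Real.exp (-(riemannSum q n t s)) ≤ 1 := Real.exp_le_one_iff.mpr (by linarith)
    have p1 := Real.exp_pos (-(∫ y in s..t, q y))
    have p2 := Real.exp_pos (-(riemannSum q n t s))
    rw [abs_le]
    constructor <;> linarith
  have hsup : ∀ l : ℕ, Real.exp (-2) * (1/2:ℝ) ^ (l+1) ≤ supExpError q (2 ^ m l) := by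
    intro l
    have hle := le_ciSup (hbdd (2 ^ m l))
      (⟨((1:ℝ), (0:ℝ)), by norm_num⟩ : {p : ℝ × ℝ // 0 ≤ p.2 ∧ p.2 ≤ p.1 ∧ p.1 ≤ 1})
    rw [supExpError]
    refine le_trans ?_ hle
    simp only
    rw [hR l]
    set I := ∫ y in (0:ℝ)..1, q y with hI
    have h1 : 1 - (1/2:ℝ) ^ (l+2) ≤ I := hIge l
    have h2 : I ≤ 2 := hIle
    have hpl : (0:ℝ) < (1/2:ℝ) ^ l := by positivity
    have epow1 : (1/2:ℝ) ^ (l+1) = (1/2:ℝ) ^ l / 2 := by ring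
    have epow2 : (1/2:ℝ) ^ (l+2) = (1/2:ℝ) ^ l / 4 := by ring
    have hRle : (1:ℝ) - (1/2:ℝ) ^ l ≤ I := by linarith
    have habs : |Real.exp (-I) - Real.exp (-(1 - (1/2:ℝ) ^ l))|
        = Real.exp (-(1 - (1/2:ℝ) ^ l)) - Real.exp (-I) := by
      rw [abs_sub_comm, abs_of_nonneg (sub_nonneg.mpr (Real.exp_le_exp.mpr (by linarith)))]
    rw [habs]
    have e1 : Real.exp (-(1 - (1/2:ℝ) ^ l))
        = Real.exp (-I) * Real.exp (I - (1 - (1/2:ℝ) ^ l)) := by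
      rw [← Real.exp_add]; ring_nf
    have e2 := Real.add_one_le_exp (I - (1 - (1/2:ℝ) ^ l))
    have e3 : Real.exp (-2) ≤ Real.exp (-I) := Real.exp_le_exp.mpr (by linarith)
    have e4 := Real.exp_pos (-I)
    have hD : (1/2:ℝ) ^ (l+1) ≤ I - (1 - (1/2:ℝ) ^ l) := by linarith
    calc Real.exp (-2) * (1/2:ℝ) ^ (l+1)
        ≤ Real.exp (-I) * (I - (1 - (1/2:ℝ) ^ l)) :=
          mul_le_mul e3 hD (by positivity) e4.le
      _ ≤ Real.exp (-(1 - (1/2:ℝ) ^ l)) - Real.exp (-I) := by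
          have e5 : Real.exp (-I) * ((I - (1 - (1/2:ℝ) ^ l)) + 1)
              ≤ Real.exp (-I) * Real.exp (I - (1 - (1/2:ℝ) ^ l)) :=
            mul_le_mul_of_nonneg_left e2 e4.le
          nlinarith [e5, e1]
  -- Step 6: conclude.
  refine ⟨q, hqc.continuousOn, hq0, ?_⟩
  intro M
  rw [frequently_atTop]
  intro N
  set l := max (Nat.ceil M) N with hl
  refine ⟨2 ^ m l, ?_, ?_⟩
  · have h1 : l < m l := (hm l).1
    have h2 : m l < 2 ^ m l := Nat.lt_two_pow_self
    have h3 : N ≤ l := le_max_right _ _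
    omega
  · have hδn := (hm l).2
    have hδpos' : 0 < δ (2 ^ m l) := hδpos _ Nat.one_le_two_pow
    have hl1 : (0:ℝ) < (l : ℝ) + 1 := by positivity
    have hMl : M ≤ (l : ℝ) := by
      calc M ≤ (Nat.ceil M : ℝ) := Nat.le_ceil M
        _ ≤ (l : ℝ) := by exact_mod_cast Nat.cast_le.mpr (le_max_left _ _)
    have hstep : ((l : ℝ) + 1) < Real.exp (-2) * (1/2:ℝ) ^ (l+1) / δ (2 ^ m l) := by
      rw [lt_div_iff₀ hδpos']
      have := (lt_div_iff₀ hl1).mp hδn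
      nlinarith
    have hfinal : Real.exp (-2) * (1/2:ℝ) ^ (l+1) / δ (2 ^ m l)
        ≤ supExpError q (2 ^ m l) / δ (2 ^ m l) :=
      div_le_div_of_nonneg_right (hsup l) hδpos'.le
    linarith
end

section
/- There exists a Lebesgue-measurable function q : [0,1] → ℝ with 0 ≤ q(t) ≤ M for all t (for some constant M > 0) such that liminf_{n→∞} sup_{(t,s)∈Δ} |exp(−∫_s^t q(y) dy) − exp(−R_n(q;t,s))| > 0. -/
open intervalIntegral Finset Filter

/-- The Dirichlet function: indicator of the rationals. -/
noncomputable def dirichlet : ℝ → ℝ :=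
  Set.indicator (Set.range ((↑) : ℚ → ℝ)) (fun _ => 1)

lemma dirichlet_nonneg (t : ℝ) : 0 ≤ dirichlet t := by
  unfold dirichlet
  by_cases h : t ∈ Set.range ((↑) : ℚ → ℝ) <;> simp [h]

lemma dirichlet_le_one (t : ℝ) : dirichlet t ≤ 1 := by
  unfold dirichlet
  by_cases h : t ∈ Set.range ((↑) : ℚ → ℝ) <;> simp [h]

lemma dirichlet_measurable : Measurable dirichlet :=
  measurable_const.indicator (Set.countable_range _).measurableSet

lemma dirichlet_integral_zero : (∫ y in (0:ℝ)..1, dirichlet y) = 0 := by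
  have hnull : MeasureTheory.volume (Set.range ((↑) : ℚ → ℝ)) = 0 :=
    (Set.countable_range _).measure_zero _
  have hae : ∀ᵐ x ∂(MeasureTheory.volume), dirichlet x = 0 := by
    have := MeasureTheory.measure_eq_zero_iff_ae_notMem.mp hnull
    filter_upwards [this] with x hx
    exact Set.indicator_of_notMem hx _
  rw [intervalIntegral.integral_congr_ae (g := fun _ => (0:ℝ))
    (by filter_upwards [hae] with x hx _ using hx)]
  simp

lemma dirichlet_riemannSum (n : ℕ) (hn : 1 ≤ n) : riemannSum dirichlet n 1 0 = 1 := by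
  unfold riemannSum
  have hval : ∀ k : ℕ, dirichlet (0 + (k : ℝ) * (1 - 0) / n) = 1 := by
    intro k
    have hmem : (0 + (k : ℝ) * (1 - 0) / n) ∈ Set.range ((↑) : ℚ → ℝ) :=
      ⟨(k : ℚ) / n, by push_cast; ring⟩
    simpa [dirichlet] using Set.indicator_of_mem hmem (fun _ => (1:ℝ))
  rw [Finset.sum_congr rfl (fun k _ => hval k)]
  have hn' : (n : ℝ) ≠ 0 := Nat.cast_ne_zero.mpr (by omega)
  simp
  field_simp

lemma expError_le_one (q : ℝ → ℝ) (hq : ∀ t, 0 ≤ q t) (n : ℕ)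
    (p : {p : ℝ × ℝ // 0 ≤ p.2 ∧ p.2 ≤ p.1 ∧ p.1 ≤ 1}) :
    |Real.exp (-(∫ y in p.1.2..p.1.1, q y)) - Real.exp (-(riemannSum q n p.1.1 p.1.2))| ≤ 1 := by
  obtain ⟨⟨t, s⟩, hs, hst, ht⟩ := p
  have hA : 0 ≤ ∫ y in s..t, q y :=
    intervalIntegral.integral_nonneg hst (fun u _ => hq u)
  have hB : 0 ≤ riemannSum q n t s := by
    unfold riemannSum
    apply mul_nonneg
    · exact div_nonneg (by linarith) (Nat.cast_nonneg n)
    · exact Finset.sum_nonneg fun k _ => hq _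
  have h1 : Real.exp (-(∫ y in s..t, q y)) ≤ 1 := Real.exp_le_one_iff.mpr (by linarith)
  have h2 : Real.exp (-(riemannSum q n t s)) ≤ 1 := Real.exp_le_one_iff.mpr (by linarith)
  have p1 := Real.exp_pos (-(∫ y in s..t, q y))
  have p2 := Real.exp_pos (-(riemannSum q n t s))
  rw [abs_le]
  constructor <;> simp only at * <;> nlinarith

lemma supExpError_bddAbove (q : ℝ → ℝ) (hq : ∀ t, 0 ≤ q t) (n : ℕ) :
    BddAbove (Set.range fun p : {p : ℝ × ℝ // 0 ≤ p.2 ∧ p.2 ≤ p.1 ∧ p.1 ≤ 1} =>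
      |Real.exp (-(∫ y in p.1.2..p.1.1, q y)) - Real.exp (-(riemannSum q n p.1.1 p.1.2))|) :=
  ⟨1, by rintro _ ⟨p, rfl⟩; exact expError_le_one q hq n p⟩

instance : Nonempty {p : ℝ × ℝ // 0 ≤ p.2 ∧ p.2 ≤ p.1 ∧ p.1 ≤ 1} :=
  ⟨⟨((1:ℝ), (0:ℝ)), le_refl 0, zero_le_one, le_refl 1⟩⟩

/-- There is a bounded measurable `q : [0,1] → ℝ`, `0 ≤ q ≤ M`, such that
`liminf_n sup_{(t,s)∈Δ} |exp(−∫_s^t q) − exp(−R_n(q;t,s))| > 0`. -/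
theorem exp_riemann_error_no_convergence_measurable :
    ∃ M : ℝ, 0 < M ∧ ∃ q : ℝ → ℝ, Measurable q ∧ (∀ t, 0 ≤ q t ∧ q t ≤ M) ∧
      0 < atTop.liminf (fun n : ℕ => supExpError q n) := by
  refine ⟨1, one_pos, dirichlet, dirichlet_measurable,
    fun t => ⟨dirichlet_nonneg t, dirichlet_le_one t⟩, ?_⟩
  set c : ℝ := 1 - Real.exp (-1) with hc
  have hcpos : 0 < c := by
    have := Real.exp_lt_one_iff.mpr (by norm_num : (-1:ℝ) < 0)
    linarith
  have hbound : ∀ n : ℕ, 1 ≤ n → c ≤ supExpError dirichlet n := by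
    intro n hn
    have key : |Real.exp (-(∫ y in (0:ℝ)..1, dirichlet y)) -
        Real.exp (-(riemannSum dirichlet n 1 0))| = c := by
      rw [dirichlet_integral_zero, dirichlet_riemannSum n hn]
      rw [abs_of_nonneg]
      · simp [hc]
      · have := Real.exp_le_one_iff.mpr (by norm_num : (-1:ℝ) ≤ 0)
        simp only [neg_zero, Real.exp_zero]
        linarith
    calc c = _ := key.symm
      _ ≤ supExpError dirichlet n :=
        le_ciSup (supExpError_bddAbove dirichlet dirichlet_nonneg n)
          ⟨((1:ℝ), (0:ℝ)), le_refl 0, zero_le_one, le_refl 1⟩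
  have hub : ∀ n : ℕ, supExpError dirichlet n ≤ 1 := by
    intro n
    exact ciSup_le fun p => expError_le_one dirichlet dirichlet_nonneg n p
  have hcb : Filter.IsCoboundedUnder (· ≥ ·) atTop (fun n : ℕ => supExpError dirichlet n) :=
    Filter.IsBoundedUnder.isCoboundedUnder_ge ⟨1, Filter.eventually_atTop.mpr ⟨0, fun n _ => hub n⟩⟩
  have := Filter.le_liminf_of_le hcb
    (Filter.eventually_atTop.mpr ⟨1, fun n hn => hbound n hn⟩)
  linarith
end

section
/- Let q : [0,1] → ℝ be bounded and Lebesgue-measurable, let n ≥ 1 be a natural number and let τ ∈ [0,1]. Suppose S and E are continuous linear operators on L²([0,1]) such that for every f ∈ L²([0,1]): (Sf)(t) = f(t − τ/n) for almost every t ∈ [τ/n, 1] and (Sf)(t) = 0 for almost every t ∈ [0, τ/n), and (Ef)(t) = exp(−(τ/n)·q(t))·f(t) for almost every t ∈ [0,1]. Then the n-fold composition (S∘E)^n satisfies, for every f ∈ L²([0,1]): ((S∘E)^n f)(t) = exp(−(τ/n)·Σ_{k=0}^{n−1} q(t − τ + k·τ/n))·f(t−τ) for almost every t ∈ [τ,1],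 and ((S∘E)^n f)(t) = 0 for almost every t ∈ [0,τ). (This is the explicit form of the Trotter product (e^{−τD₀/n} e^{−τQ/n})^n for the right-shift semigroup and the multiplication semigroup generated by q.) -/
open MeasureTheory Finset

/-- Lebesgue measure restricted to `[0,1]`. -/
noncomputable def mu01 : Measure ℝ := volume.restrict (Set.Icc (0 : ℝ) 1)

private lemma ae_shift {h : ℝ} {P : ℝ → Prop}
    (hp : ∀ᵐ t ∂(volume : Measure ℝ), P t) :
    ∀ᵐ t ∂(volume : Measure ℝ), P (t - h) :=
  ((measurePreserving_sub_right (volume : Measure ℝ) h).quasiMeasurePreserving.tendsto_ae).eventually hp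

/-- **Explicit form of the Trotter product `(e^{−τD₀/n} e^{−τQ/n})^n` on `L²([0,1])`.**
If `S` is the truncated right-shift by `τ/n` and `E` is multiplication by
`exp(−(τ/n) q(t))`, then `(S∘E)^n` is the weighted right-shift by `τ`:
`((S∘E)^n f)(t) = exp(−(τ/n) Σ_{k<n} q(t−τ+kτ/n)) f(t−τ)` for a.e. `t ∈ [τ,1]`, and
`((S∘E)^n f)(t) = 0` for a.e. `t ∈ [0,τ)`. -/
theorem trotter_product_explicit_form (q : ℝ → ℝ) (hq_meas : Measurable q)
    (M : ℝ) (hq_bdd : ∀ t, |q t| ≤ M) (n : ℕ) (hn : 1 ≤ n)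
    (τ : ℝ) (hτ0 : 0 ≤ τ) (hτ1 : τ ≤ 1)
    (S E : Lp ℝ 2 mu01 →L[ℝ] Lp ℝ 2 mu01)
    (hS₁ : ∀ f : Lp ℝ 2 mu01,
      ∀ᵐ t ∂mu01, t ∈ Set.Icc (τ / n) 1 → (S f : ℝ → ℝ) t = (f : ℝ → ℝ) (t - τ / n))
    (hS₂ : ∀ f : Lp ℝ 2 mu01,
      ∀ᵐ t ∂mu01, t ∈ Set.Ico 0 (τ / n) → (S f : ℝ → ℝ) t = 0)
    (hE : ∀ f : Lp ℝ 2 mu01,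
      ∀ᵐ t ∂mu01, t ∈ Set.Icc (0 : ℝ) 1 →
        (E f : ℝ → ℝ) t = Real.exp (-(τ / n) * q t) * (f : ℝ → ℝ) t) :
    ∀ f : Lp ℝ 2 mu01,
      (∀ᵐ t ∂mu01, t ∈ Set.Icc τ 1 →
          ((S.comp E) ^ n) f t
            = Real.exp (-(τ / n) * ∑ k ∈ Finset.range n, q (t - τ + k * τ / n))
                * (f : ℝ → ℝ) (t - τ)) ∧
        (∀ᵐ t ∂mu01, t ∈ Set.Ico 0 τ → ((S.comp E) ^ n) f t = 0) := by
  intro f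
  set h : ℝ := τ / n with hh
  have hn0 : (n : ℝ) ≠ 0 := Nat.cast_ne_zero.mpr (by omega)
  have hh0 : 0 ≤ h := div_nonneg hτ0 (Nat.cast_nonneg n)
  have hnh : (n : ℝ) * h = τ := by rw [hh]; field_simp
  -- main induction
  have main : ∀ m : ℕ,
      ∀ᵐ t ∂(volume : Measure ℝ), t ∈ Set.Icc (0 : ℝ) 1 →
        (t ∈ Set.Icc ((m : ℝ) * h) 1 →
          (((S.comp E) ^ m) f : ℝ → ℝ) t
            = Real.exp (-h * ∑ k ∈ Finset.range m, q (t - m * h + k * h))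
                * (f : ℝ → ℝ) (t - m * h)) ∧
        (t ∈ Set.Ico (0 : ℝ) ((m : ℝ) * h) →
          (((S.comp E) ^ m) f : ℝ → ℝ) t = 0) := by
    intro m
    induction m with
    | zero =>
        filter_upwards with t ht
        constructor
        · intro _
          simp
        · intro htm
          simp only [Nat.cast_zero, zero_mul] at htm
          exact absurd htm.2 (not_lt.mpr htm.1)
    | succ m IH =>
        set g : Lp ℝ 2 mu01 := ((S.comp E) ^ m) f with hg
        have hpow : ((((S.comp E) ^ (m + 1)) f : Lp ℝ 2 mu01) : ℝ → ℝ)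
            = ((S (E g) : Lp ℝ 2 mu01) : ℝ → ℝ) := by
          rw [pow_succ']; rfl
        have A1 : ∀ᵐ t ∂(volume : Measure ℝ), t ∈ Set.Icc (0 : ℝ) 1 →
            t ∈ Set.Icc h 1 → (S (E g) : ℝ → ℝ) t = (E g : ℝ → ℝ) (t - h) :=
          (ae_restrict_iff' measurableSet_Icc).mp (hS₁ (E g))
        have A2 : ∀ᵐ t ∂(volume : Measure ℝ), t ∈ Set.Icc (0 : ℝ) 1 →
            t ∈ Set.Ico (0 : ℝ) h → (S (E g) : ℝ → ℝ) t = 0 :=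
          (ae_restrict_iff' measurableSet_Icc).mp (hS₂ (E g))
        have B0 : ∀ᵐ t ∂(volume : Measure ℝ), t ∈ Set.Icc (0 : ℝ) 1 →
            t ∈ Set.Icc (0 : ℝ) 1 →
            (E g : ℝ → ℝ) t = Real.exp (-h * q t) * (g : ℝ → ℝ) t :=
          (ae_restrict_iff' measurableSet_Icc).mp (hE g)
        have B : ∀ᵐ t ∂(volume : Measure ℝ), t - h ∈ Set.Icc (0 : ℝ) 1 →
            (E g : ℝ → ℝ) (t - h) = Real.exp (-h * q (t - h)) * (g : ℝ → ℝ) (t - h) := by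
          filter_upwards [ae_shift (h := h) B0] with t ht ht'
          exact ht ht' ht'
        have IH' : ∀ᵐ t ∂(volume : Measure ℝ), t - h ∈ Set.Icc (0 : ℝ) 1 →
            (t - h ∈ Set.Icc ((m : ℝ) * h) 1 →
              (g : ℝ → ℝ) (t - h)
                = Real.exp (-h * ∑ k ∈ Finset.range m, q (t - h - m * h + k * h))
                    * (f : ℝ → ℝ) (t - h - m * h)) ∧
            (t - h ∈ Set.Ico (0 : ℝ) ((m : ℝ) * h) → (g : ℝ → ℝ) (t - h) = 0) :=
          ae_shift (h := h) IH
        filter_upwards [A1, A2, B, IH'] with t hA1 hA2 hB hIH ht01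
        have htm : ((m : ℝ) + 1) * h = (m : ℝ) * h + h := by ring
        constructor
        · intro htIcc
          have hmc : ((m : ℝ) + 1 : ℝ) * h ≤ t := by
            have := htIcc.1; push_cast at this ⊢; linarith
          have hth : h ≤ t := by nlinarith [Nat.cast_nonneg (α := ℝ) m]
          have hth1 : t - h ∈ Set.Icc (0 : ℝ) 1 :=
            ⟨by linarith, by linarith [htIcc.2]⟩
          have hthm : t - h ∈ Set.Icc ((m : ℝ) * h) 1 :=
            ⟨by linarith, hth1.2⟩
          rw [hpow, hA1 ht01 ⟨hth, htIcc.2⟩, hB hth1, (hIH hth1).1 hthm]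
          have key : ∑ k ∈ Finset.range (m + 1), q (t - ((m + 1 : ℕ) : ℝ) * h + (k : ℝ) * h)
              = q (t - h) + ∑ k ∈ Finset.range m, q (t - h - (m : ℝ) * h + (k : ℝ) * h) := by
            have h1 : t - ((m + 1 : ℕ) : ℝ) * h + (m : ℝ) * h = t - h := by push_cast; ring
            rw [Finset.sum_range_succ_comm, h1]
            congr 1
            exact Finset.sum_congr rfl fun k _ => by congr 1; push_cast; ring
          have hfy : (f : ℝ → ℝ) (t - h - (m : ℝ) * h)
              = (f : ℝ → ℝ) (t - ((m + 1 : ℕ) : ℝ) * h) := by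
            congr 1; push_cast; ring
          rw [key, hfy, ← mul_assoc, ← Real.exp_add, mul_add]
        · intro htIco
          have htlt : t < ((m : ℝ) + 1) * h := by
            have := htIco.2; push_cast at this; linarith
          rcases lt_or_ge t h with hth | hth
          · rw [hpow, hA2 ht01 ⟨htIco.1, hth⟩]
          · have hth1 : t - h ∈ Set.Icc (0 : ℝ) 1 :=
              ⟨by linarith, by linarith [ht01.2]⟩
            have hthm : t - h ∈ Set.Ico (0 : ℝ) ((m : ℝ) * h) :=
              ⟨by linarith, by linarith⟩
            rw [hpow, hA1 ht01 ⟨hth, ht01.2⟩, hB hth1, (hIH hth1).2 hthm, mul_zero]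
  have mainn := main n
  have hmem : ∀ᵐ t ∂mu01, t ∈ Set.Icc (0 : ℝ) 1 :=
    ae_restrict_mem measurableSet_Icc
  have mainn' : ∀ᵐ t ∂mu01, t ∈ Set.Icc (0 : ℝ) 1 →
      (t ∈ Set.Icc ((n : ℝ) * h) 1 →
        (((S.comp E) ^ n) f : ℝ → ℝ) t
          = Real.exp (-h * ∑ k ∈ Finset.range n, q (t - n * h + k * h))
              * (f : ℝ → ℝ) (t - n * h)) ∧
      (t ∈ Set.Ico (0 : ℝ) ((n : ℝ) * h) →
        (((S.comp E) ^ n) f : ℝ → ℝ) t = 0) :=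
    ae_restrict_of_ae mainn
  refine ⟨?_, ?_⟩
  · filter_upwards [mainn', hmem] with t ht ht01 htτ
    have h1 := (ht ht01).1 (by rw [hnh]; exact htτ)
    have hsum : ∑ k ∈ Finset.range n, q (t - τ + (k : ℝ) * h)
        = ∑ k ∈ Finset.range n, q (t - τ + (k : ℝ) * τ / (n : ℝ)) :=
      Finset.sum_congr rfl fun k _ => by rw [hh, mul_div_assoc]
    rw [h1, hnh, hsum]
  · filter_upwards [mainn', hmem] with t ht ht01 htτ
    exact (ht ht01).2 (by rw [hnh]; exact htτ)
  done
end
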